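/- Let N ≥ 2 and let γ_{(s_1,…,s_N)}, s_n ∈ {1,2}, be the Mermin-Klyshko coefficients defined by γ_{(1,1)} = γ_{(1,2)} = γ_{(2,1)} = 1, γ_{(2,2)} = −1, and γ_{(s_1,…,s_{n-1},s_n)} = γ_{(s_1,…,s_{n-1})} + (δ_{s_n,1} − δ_{s_n,2}) γ_{(s̄_1,…,s̄_{n-1})} for 3 ≤ n ≤ N, where s̄ flips 1 ↔ 2. Let (Ω, μ) be a probability space and for each site n ∈ {1,…,N} let X_n^{(1)}, X_n^{(2)} : Ω → ℝ be measurable functions with |X_n^{(s)}(ω)| ≤ 1 for all ω. Then | ∑_{s_1,…,s_N ∈ {1,2}} γ_{(s_1,…,s_N)} ∫_Ω X_1^{(s_1)} ⋯ X_N^{(s_N)} dμ | ≤ 2^{N−1}. -/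
import Mathlib


open MeasureTheory

/-- The flip `1 ↔ 2` of a setting label (settings are `0`-indexed: `0` stands for the
first setting and `1` for the second). -/
def flipSetting (s : Fin 2) : Fin 2 := if s = 0 then 1 else 0

/-- The Mermin-Klyshko coefficients `γ_{(s₁,…,s_N)}` for `N = m + 2` parties, settings
`0`-indexed: base case is the CHSH matrix `γ_{(1,1)} = γ_{(1,2)} = γ_{(2,1)} = 1`,
`γ_{(2,2)} = −1`; recursion
`γ_{(s₁,…,s_{n-1},s_n)} = γ_{(s₁,…,s_{n-1})} + (δ_{s_n,1} − δ_{s_n,2}) γ_{(s̄₁,…,s̄_{n-1})}`. -/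
noncomputable def MKcoeff : (m : ℕ) → (Fin (m + 2) → Fin 2) → ℝ
  | 0, s => if s 0 = 1 ∧ s 1 = 1 then -1 else 1
  | m + 1, s =>
      MKcoeff m (fun i => s i.castSucc) +
        (if s (Fin.last (m + 2)) = 0 then 1 else -1) *
          MKcoeff m (fun i => flipSetting (s i.castSucc))

lemma flipSetting_invol : Function.Involutive flipSetting := by
  intro s; fin_cases s <;> rfl

def flipPerm : Equiv.Perm (Fin 2) := flipSetting_invol.toPerm _

lemma abs_comb {p q : ℝ} (hp : |p| ≤ 1) (hq : |q| ≤ 1) :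
    |p + q| + |p - q| ≤ 2 := by
  rcases abs_cases (p + q) with ⟨h1, _⟩ | ⟨h1, _⟩ <;>
  rcases abs_cases (p - q) with ⟨h2, _⟩ | ⟨h2, _⟩ <;>
  rcases abs_cases p with ⟨h3, _⟩ | ⟨h3, _⟩ <;>
  rcases abs_cases q with ⟨h4, _⟩ | ⟨h4, _⟩ <;>
  linarith

lemma MK_pointwise (m : ℕ) (x : Fin (m + 2) → Fin 2 → ℝ)
    (hx : ∀ n s, |x n s| ≤ 1) :
    |∑ s : Fin (m + 2) → Fin 2, MKcoeff m s * ∏ n, x n (s n)| ≤ 2 ^ (m + 1) := by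
  induction m with
  | zero =>
      rw [← Equiv.sum_comp (finTwoArrowEquiv (Fin 2)).symm]
      rw [Fintype.sum_prod_type]
      simp only [finTwoArrowEquiv_symm_apply, Fin.sum_univ_two, Fin.prod_univ_succ, Fin.prod_univ_zero, mul_one]
      simp only [MKcoeff, Matrix.cons_val_zero, Matrix.cons_val_one, Matrix.head_cons]
      norm_num
      have h1 : |x 0 0 * (x 1 0 + x 1 1) + x 0 1 * (x 1 0 - x 1 1)| ≤ 2 := by
        calc |x 0 0 * (x 1 0 + x 1 1) + x 0 1 * (x 1 0 - x 1 1)|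
            ≤ |x 0 0 * (x 1 0 + x 1 1)| + |x 0 1 * (x 1 0 - x 1 1)| := abs_add_le _ _
          _ ≤ |x 1 0 + x 1 1| + |x 1 0 - x 1 1| := by
              rw [abs_mul, abs_mul]
              have := hx 0 0; have := hx 0 1
              have := abs_nonneg (x 1 0 + x 1 1); have := abs_nonneg (x 1 0 - x 1 1)
              nlinarith
          _ ≤ 2 := abs_comb (hx 1 0) (hx 1 1)
      calc |x 0 0 * x 1 0 + x 0 0 * x 1 1 + (x 0 1 * x 1 0 + -(x 0 1 * x 1 1))|
          = |x 0 0 * (x 1 0 + x 1 1) + x 0 1 * (x 1 0 - x 1 1)| := by ring_nf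
        _ ≤ 2 := h1
  | succ m ih =>
      rw [← Equiv.sum_comp (Fin.snocEquiv (fun _ => Fin 2))]
      rw [Fintype.sum_prod_type]
      have hsnoc : ∀ (a : Fin 2) (s' : Fin (m + 2) → Fin 2),
          (MKcoeff (m + 1) (Fin.snocEquiv (fun _ => Fin 2) (a, s')) *
            ∏ n, x n ((Fin.snocEquiv (fun _ => Fin 2) (a, s')) n)) =
          ((MKcoeff m s' + (if a = 0 then 1 else -1) *
              MKcoeff m (fun i => flipSetting (s' i))) *
            ((∏ i : Fin (m + 2), x i.castSucc (s' i)) * x (Fin.last (m + 2)) a)) := by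
        intro a s'
        have he : ∀ i : Fin (m + 2),
            (Fin.snocEquiv (fun _ => Fin 2) (a, s')) i.castSucc = s' i := by
          intro i; simp [Fin.snocEquiv]
        have hl : (Fin.snocEquiv (fun _ => Fin 2) (a, s')) (Fin.last (m + 2)) = a := by
          simp [Fin.snocEquiv]
        rw [show MKcoeff (m + 1) (Fin.snocEquiv (fun _ => Fin 2) (a, s')) =
            MKcoeff m s' + (if a = 0 then 1 else -1) *
              MKcoeff m (fun i => flipSetting (s' i)) by
          simp only [MKcoeff, he, hl]]
        rw [Fin.prod_univ_castSucc]
        simp only [he, hl]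
      simp only [hsnoc]
      rw [Fin.sum_univ_two]
      norm_num
      set F := ∑ s' : Fin (m + 2) → Fin 2,
        MKcoeff m s' * ∏ i : Fin (m + 2), x i.castSucc (s' i) with hF
      set G := ∑ s' : Fin (m + 2) → Fin 2,
        MKcoeff m (fun i => flipSetting (s' i)) * ∏ i : Fin (m + 2), x i.castSucc (s' i)
        with hG
      have hsum0 : ∑ s' : Fin (m + 2) → Fin 2,
          (MKcoeff m s' + MKcoeff m (fun i => flipSetting (s' i))) *
            ((∏ i : Fin (m + 2), x i.castSucc (s' i)) * x (Fin.last (m + 2)) 0) =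
          (F + G) * x (Fin.last (m + 2)) 0 := by
        rw [hF, hG, ← Finset.sum_add_distrib, Finset.sum_mul]
        congr 1; ext s'; ring
      have hsum1 : ∑ s' : Fin (m + 2) → Fin 2,
          (MKcoeff m s' + -MKcoeff m (fun i => flipSetting (s' i))) *
            ((∏ i : Fin (m + 2), x i.castSucc (s' i)) * x (Fin.last (m + 2)) 1) =
          (F - G) * x (Fin.last (m + 2)) 1 := by
        rw [hF, hG, ← Finset.sum_sub_distrib, Finset.sum_mul]
        congr 1; ext s'; ring
      rw [hsum0, hsum1]
      have hFb : |F| ≤ 2 ^ (m + 1) :=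
        ih (fun i s => x i.castSucc s) (fun n s => hx n.castSucc s)
      have hGF : G = ∑ t : Fin (m + 2) → Fin 2,
          MKcoeff m t * ∏ i : Fin (m + 2), x i.castSucc (flipSetting (t i)) := by
        rw [hG]
        apply Fintype.sum_equiv (Equiv.piCongrRight (fun _ : Fin (m + 2) => flipPerm)).symm
        intro s'
        congr 1
        apply Finset.prod_congr rfl
        intro i _
        congr 1
        exact (flipSetting_invol (s' i)).symm
      have hGb : |G| ≤ 2 ^ (m + 1) := by
        rw [hGF]
        exact ih (fun i s => x i.castSucc (flipSetting s))
          (fun n s => hx n.castSucc (flipSetting s))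
      set p := x (Fin.last (m + 2)) 0
      set q := x (Fin.last (m + 2)) 1
      have hcomb : |p + q| + |p - q| ≤ 2 :=
        abs_comb (hx (Fin.last (m + 2)) 0) (hx (Fin.last (m + 2)) 1)
      have key : |(F + G) * p + (F - G) * q| ≤ 2 ^ (m + 1) * (|p + q| + |p - q|) := by
        have : (F + G) * p + (F - G) * q = F * (p + q) + G * (p - q) := by ring
        rw [this]
        calc |F * (p + q) + G * (p - q)|
            ≤ |F * (p + q)| + |G * (p - q)| := abs_add_le _ _
          _ = |F| * |p + q| + |G| * |p - q| := by rw [abs_mul, abs_mul]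
          _ ≤ 2 ^ (m + 1) * |p + q| + 2 ^ (m + 1) * |p - q| := by
              have := abs_nonneg (p + q); have := abs_nonneg (p - q)
              nlinarith
          _ = 2 ^ (m + 1) * (|p + q| + |p - q|) := by ring
      calc |(F + G) * p + (F - G) * q|
          ≤ 2 ^ (m + 1) * (|p + q| + |p - q|) := key
        _ ≤ 2 ^ (m + 1) * 2 := by nlinarith [pow_pos (show (0:ℝ) < 2 by norm_num) (m+1)]
        _ = 2 ^ (m + 1 + 1) := by ring


/-- The Mermin-Klyshko inequality (58) for an LHV model `(Ω, μ)` with two measurable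
outcome maps `X n 0, X n 1 : Ω → [-1,1]` per site, `N = m + 2 ≥ 2` sites:
`|∑_{s₁,…,s_N} γ_{(s₁,…,s_N)} ∫ X₁^{(s₁)} ⋯ X_N^{(s_N)} dμ| ≤ 2^{N−1}`. -/
theorem stmt_11 {Ω : Type*} [MeasurableSpace Ω] (μ : Measure Ω) [IsProbabilityMeasure μ]
    (m : ℕ) (X : Fin (m + 2) → Fin 2 → Ω → ℝ)
    (hX : ∀ n s, Measurable (X n s))
    (hbd : ∀ n s ω, |X n s ω| ≤ 1) :
    |∑ s : Fin (m + 2) → Fin 2, MKcoeff m s * ∫ ω, ∏ n, X n (s n) ω ∂μ| ≤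
      2 ^ (m + 1) := by
  have hmeas : ∀ s : Fin (m + 2) → Fin 2,
      Measurable (fun ω => ∏ n, X n (s n) ω) :=
    fun s => Finset.measurable_prod _ fun n _ => hX n (s n)
  have hInt : ∀ s : Fin (m + 2) → Fin 2,
      Integrable (fun ω => ∏ n, X n (s n) ω) μ := by
    intro s
    refine Integrable.mono' (integrable_const (1 : ℝ))
      (hmeas s).aestronglyMeasurable (ae_of_all _ fun ω => ?_)
    rw [Real.norm_eq_abs, Finset.abs_prod]
    exact Finset.prod_le_one (fun n _ => abs_nonneg _) (fun n _ => hbd n (s n) ω)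
  have hswap : ∑ s : Fin (m + 2) → Fin 2, MKcoeff m s * ∫ ω, ∏ n, X n (s n) ω ∂μ =
      ∫ ω, ∑ s : Fin (m + 2) → Fin 2, MKcoeff m s * ∏ n, X n (s n) ω ∂μ := by
    rw [integral_finset_sum _ fun s _ => (hInt s).const_mul (MKcoeff m s)]
    exact Finset.sum_congr rfl fun s _ => (integral_const_mul _ _).symm
  rw [hswap, ← Real.norm_eq_abs]
  have := norm_integral_le_of_norm_le_const (μ := μ) (C := 2 ^ (m + 1))
    (f := fun ω => ∑ s : Fin (m + 2) → Fin 2, MKcoeff m s * ∏ n, X n (s n) ω)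
    (ae_of_all _ fun ω => by
      rw [Real.norm_eq_abs]
      exact MK_pointwise m (fun n s => X n s ω) (fun n s => hbd n s ω))
  simpa using this
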